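/- For a cochain complex C of R[x,x^{-1},y,y^{-1}]-modules, the evaluation map C ⊗_R R[x,x^{-1},y,y^{-1}] → C, z ⊗ p ↦ zp, induces a quasi-isomorphism from the mapping 2-torus T(y, x; 0) to C, where x and y denote the R-linear self-maps of C given by multiplication by the indeterminates. -/

import Mathlib

open scoped TensorProduct

noncomputable section

variable (R : Type) [CommRing R]

/-- The Laurent polynomial ring in two variables, `L = R[x,x⁻¹,y,y⁻¹]`, realised as the
monoid algebra of `ℤ × ℤ` over `R`. -/
abbrev L2 := AddMonoidAlgebra R (ℤ × ℤ)

/-- The indeterminate `x ∈ L`. -/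
noncomputable def xvar : L2 R := AddMonoidAlgebra.single ((1 : ℤ), (0 : ℤ)) (1 : R)

/-- The indeterminate `y ∈ L`. -/
noncomputable def yvar : L2 R := AddMonoidAlgebra.single ((0 : ℤ), (1 : ℤ)) (1 : R)

/-- A chain map `f` between (elementwise given) cochain complexes is a quasi-isomorphism. -/
def IsQuasiIso (S : Type) [Ring S] (X Y : ℤ → Type)
    [∀ q, AddCommGroup (X q)] [∀ q, Module S (X q)]
    [∀ q, AddCommGroup (Y q)] [∀ q, Module S (Y q)]
    (dX : ∀ q, X q →ₗ[S] X (q + 1)) (dY : ∀ q, Y q →ₗ[S] Y (q + 1))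
    (f : ∀ q, X q →ₗ[S] Y q) : Prop :=
  (∀ (q : ℤ) (y : Y (q + 1)), dY (q + 1) y = 0 →
      ∃ x : X (q + 1), dX (q + 1) x = 0 ∧ ∃ u : Y q, y - f (q + 1) x = dY q u) ∧
  (∀ (q : ℤ) (x : X (q + 1)), dX (q + 1) x = 0 → (∃ u : Y q, f (q + 1) x = dY q u) →
      ∃ v : X q, dX q v = x)

variable (C : ℤ → Type) [∀ n, AddCommGroup (C n)] [∀ n, Module R (C n)]

/-- The `n`-th term of the mapping 2-torus `T(f,g;0)`:
`(C^{n+2} ⊗ L) ⊕ (C^{n+1} ⊗ L) ⊕ (C^{n+1} ⊗ L) ⊕ (C^n ⊗ L)`, the Laurent polynomial factor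
written on the left. -/
def t2X (n : ℤ) : Type :=
  (L2 R ⊗[R] C (n + 1 + 1)) × (L2 R ⊗[R] C (n + 1)) × (L2 R ⊗[R] C (n + 1)) × (L2 R ⊗[R] C n)

instance (n : ℤ) : AddCommGroup (t2X R C n) := by unfold t2X; infer_instance
instance (n : ℤ) : Module (L2 R) (t2X R C n) := by unfold t2X; infer_instance

/-- The map `f ⊗ id − id ⊗ m` on `L ⊗_R C^n`, for an `R`-linear self map `f` of `C^n` and a
Laurent polynomial `m ∈ L`. -/
def twist (n : ℤ) (f : C n →ₗ[R] C n) (m : L2 R) : L2 R ⊗[R] C n →ₗ[L2 R] L2 R ⊗[R] C n :=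
  LinearMap.baseChange (L2 R) f - LinearMap.lsmul (L2 R) (L2 R ⊗[R] C n) m

/-- The differential of the mapping 2-torus `T(f,g;0)` of two commuting `R`-linear self maps
`f` and `g` of `C`, with `f ⊗ id − id ⊗ y` and `g ⊗ id − id ⊗ x` as structure maps: the
matrix `((d,0,0,0), (−(g−x),−d,0,0), ((f−y),0,−d,0), (0,(f−y),(g−x),d))`. -/
def t2D (dC : ∀ n, C n →ₗ[R] C (n + 1)) (f g : ∀ n, C n →ₗ[R] C n) (n : ℤ) :
    t2X R C n →ₗ[L2 R] t2X R C (n + 1) :=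
  letI p1 : t2X R C n →ₗ[L2 R] L2 R ⊗[R] C (n + 1 + 1) := LinearMap.fst (L2 R) _ _
  letI r1 := LinearMap.snd (L2 R) (L2 R ⊗[R] C (n + 1 + 1))
    ((L2 R ⊗[R] C (n + 1)) × (L2 R ⊗[R] C (n + 1)) × (L2 R ⊗[R] C n))
  letI p2 : t2X R C n →ₗ[L2 R] L2 R ⊗[R] C (n + 1) := (LinearMap.fst (L2 R) _ _).comp r1
  letI r2 := (LinearMap.snd (L2 R) (L2 R ⊗[R] C (n + 1))
    ((L2 R ⊗[R] C (n + 1)) × (L2 R ⊗[R] C n))).comp r1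
  letI p3 : t2X R C n →ₗ[L2 R] L2 R ⊗[R] C (n + 1) := (LinearMap.fst (L2 R) _ _).comp r2
  letI p4 : t2X R C n →ₗ[L2 R] L2 R ⊗[R] C n := (LinearMap.snd (L2 R) _ _).comp r2
  LinearMap.prod ((LinearMap.baseChange (L2 R) (dC (n + 1 + 1))).comp p1)
    (LinearMap.prod
      (-((twist R C (n + 1 + 1) (g (n + 1 + 1)) (xvar R)).comp p1)
        - (LinearMap.baseChange (L2 R) (dC (n + 1))).comp p2)
      (LinearMap.prod
        ((twist R C (n + 1 + 1) (f (n + 1 + 1)) (yvar R)).comp p1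
          - (LinearMap.baseChange (L2 R) (dC (n + 1))).comp p3)
        ((twist R C (n + 1) (f (n + 1)) (yvar R)).comp p2
          + (twist R C (n + 1) (g (n + 1)) (xvar R)).comp p3
          + (LinearMap.baseChange (L2 R) (dC n)).comp p4)))


set_option linter.unusedSectionVars false

namespace TwoTorusAux
open Finsupp

noncomputable section

variable {R : Type} [CommRing R] {D : Type} [AddCommGroup D] [Module R D]

/-- The shift operator `(shiftMap F) i = F (i - 1)`. -/
noncomputable def shiftMap : (ℤ →₀ D) →ₗ[R] (ℤ →₀ D) :=
  (Finsupp.domLCongr (Equiv.addRight (1 : ℤ))).toLinearMap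

@[simp] lemma shiftMap_single (i : ℤ) (d : D) :
    (shiftMap (R := R) (Finsupp.single i d)) = Finsupp.single (i + 1) d := by
  simp [shiftMap]

@[simp] lemma shiftMap_apply (F : ℤ →₀ D) (i : ℤ) :
    (shiftMap (R := R) F) i = F (i - 1) := by
  simp [shiftMap, Finsupp.domLCongr_apply, Finsupp.equivMapDomain_apply]
  rfl

/-- The one-variable twist operator `(Tw t F) i = t (F i) - F (i-1)`. -/
noncomputable def Tw (t : D ≃ₗ[R] D) : (ℤ →₀ D) →ₗ[R] (ℤ →₀ D) :=
  Finsupp.mapRange.linearMap t.toLinearMap - shiftMap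

@[simp] lemma Tw_apply (t : D ≃ₗ[R] D) (F : ℤ →₀ D) (i : ℤ) :
    Tw t F i = t (F i) - F (i - 1) := by
  simp [Tw]

lemma Tw_single (t : D ≃ₗ[R] D) (i : ℤ) (d : D) :
    Tw t (Finsupp.single i d) = Finsupp.single i (t d) - Finsupp.single (i + 1) d := by
  simp [Tw]

/-- The one-variable augmentation `Sg t F = ∑ i, t^i (F i)`. -/
noncomputable def Sg (t : D ≃ₗ[R] D) : (ℤ →₀ D) →ₗ[R] D :=
  Finsupp.lsum R (fun i => ((t ^ i : D ≃ₗ[R] D) : D →ₗ[R] D))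

@[simp] lemma Sg_single (t : D ≃ₗ[R] D) (i : ℤ) (d : D) :
    Sg t (Finsupp.single i d) = (t ^ i : D ≃ₗ[R] D) d := by
  simp [Sg]

lemma Sg_Tw (t : D ≃ₗ[R] D) (F : ℤ →₀ D) : Sg t (Tw t F) = 0 := by
  have : (Sg t).comp (Tw t) = 0 := by
    apply Finsupp.lhom_ext
    intro i d
    simp only [LinearMap.coe_comp, Function.comp_apply, Tw_single, map_sub, Sg_single,
      zpow_add_one t i, LinearMap.zero_apply]
    rw [show ((t ^ i * t : D ≃ₗ[R] D) d) = (t ^ i : D ≃ₗ[R] D) (t d) from rfl, sub_self]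
  exact DFunLike.congr_fun this F

lemma Tw_eq_zero (t : D ≃ₗ[R] D) (F : ℤ →₀ D) (hF : Tw t F = 0) : F = 0 := by
  by_contra hne
  have hne' : F.support.Nonempty := Finsupp.support_nonempty_iff.mpr hne
  obtain ⟨i, hi, hmax⟩ := F.support.exists_max_image id hne'
  have h1 : F (i + 1) = 0 := by
    by_contra h
    have := hmax (i + 1) (Finsupp.mem_support_iff.mpr h)
    simp only [id] at this
    omega
  have h2 : Tw t F (i + 1) = 0 := by rw [hF]; rfl
  rw [Tw_apply, h1, map_zero, add_sub_cancel_right] at h2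
  exact (Finsupp.mem_support_iff.mp hi) (by simpa using h2.symm)

lemma Tw_injective (t : D ≃ₗ[R] D) : Function.Injective (Tw t) := by
  intro a b hab
  have : Tw t (a - b) = 0 := by rw [map_sub, hab, sub_self]
  have := Tw_eq_zero t _ this
  exact sub_eq_zero.mp this

lemma sub_single_mem (t : D ≃ₗ[R] D) (i : ℤ) (d : D) :
    Finsupp.single i d - Finsupp.single 0 ((t ^ i : D ≃ₗ[R] D) d) ∈ LinearMap.range (Tw t) := by
  induction i using Int.induction_on generalizing d with
  | zero => simp
  | succ k ih =>
      have h1 : Finsupp.single ((k : ℤ) + 1) d - Finsupp.single (k : ℤ) (t d)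
          ∈ LinearMap.range (Tw t) := ⟨-(Finsupp.single (k : ℤ) d), by
            rw [map_neg, Tw_single]; abel⟩
      have h2 := ih (t d)
      have h3 : (t ^ ((k : ℤ) + 1) : D ≃ₗ[R] D) d = (t ^ (k : ℤ) : D ≃ₗ[R] D) (t d) := by
        rw [zpow_add_one]; rfl
      rw [h3]
      have := add_mem h1 h2
      convert this using 1
      abel
  | pred k ih =>
      have hidx : (-(k : ℤ) - 1) + 1 = -(k : ℤ) := by ring
      have h1 : Finsupp.single (-(k : ℤ) - 1) d - Finsupp.single (-(k : ℤ)) (t.symm d)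
          ∈ LinearMap.range (Tw t) := ⟨Finsupp.single (-(k : ℤ) - 1) (t.symm d), by
            rw [Tw_single, hidx]
            simp⟩
      have h2 := ih (t.symm d)
      have h3 : (t ^ (-(k : ℤ) - 1) : D ≃ₗ[R] D) d = (t ^ (-(k : ℤ)) : D ≃ₗ[R] D) (t.symm d) := by
        rw [zpow_sub_one]; rfl
      rw [h3]
      have := add_mem h1 h2
      convert this using 1
      abel

lemma sub_single_zero_Sg_mem (t : D ≃ₗ[R] D) (F : ℤ →₀ D) :
    F - Finsupp.single 0 (Sg t F) ∈ LinearMap.range (Tw t) := by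
  induction F using Finsupp.induction_linear with
  | zero => simp
  | add f g hf hg =>
      have := add_mem hf hg
      convert this using 1
      rw [map_add, Finsupp.single_add]
      abel
  | single i d => rw [Sg_single]; exact sub_single_mem t i d

lemma mem_range_Tw_of_Sg_eq_zero (t : D ≃ₗ[R] D) (F : ℤ →₀ D) (h : Sg t F = 0) :
    ∃ G, Tw t G = F := by
  have := sub_single_zero_Sg_mem t F
  rw [h] at this
  simpa using this

/-- Lifting a finitely supported family of elements each in the image of `Tw t`. -/
lemma liftPointwise (t : D ≃ₗ[R] D) (F : ℤ →₀ (ℤ →₀ D)) (h : ∀ j, Sg t (F j) = 0) :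
    ∃ G, Finsupp.mapRange.linearMap (Tw t) G = F := by
  classical
  obtain ⟨m, hm⟩ : ∃ m, F.support.card = m := ⟨_, rfl⟩
  induction m generalizing F with
  | zero =>
      exact ⟨0, by rw [map_zero]; symm; rwa [← Finsupp.support_eq_empty, ← Finset.card_eq_zero]⟩
  | succ m ih =>
      obtain ⟨j, hj⟩ : F.support.Nonempty := Finset.card_pos.mp (by omega)
      obtain ⟨g, hg⟩ := mem_range_Tw_of_Sg_eq_zero t (F j) (h j)
      obtain ⟨G', hG'⟩ := ih (F.erase j) (fun j' => by
        rcases eq_or_ne j' j with rfl | hne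
        · simp
        · rw [Finsupp.erase_ne hne]; exact h j')
        (by rw [Finsupp.support_erase, Finset.card_erase_of_mem hj]; omega)
      refine ⟨G' + Finsupp.single j g, ?_⟩
      rw [map_add, hG']
      ext j' i
      rcases eq_or_ne j' j with rfl | hne
      · simp [hg]
      · simp [Finsupp.erase_ne hne, Finsupp.single_eq_of_ne' (Ne.symm hne)]



section Monomials

variable (R : Type) [CommRing R]
variable (D : Type) [AddCommGroup D] [Module R D] [Module (L2 R) D] [IsScalarTower R (L2 R) D]

/-- Multiplication by a Laurent polynomial, as an `R`-linear map. -/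
noncomputable def mact (m : L2 R) : D →ₗ[R] D :=
  ((LinearMap.lsmul (L2 R) D) m).restrictScalars R

@[simp] lemma mact_apply (m : L2 R) (d : D) : mact R D m d = m • d := rfl

variable {R D}

lemma single_mul_single_smul (g h : ℤ × ℤ) (r s : R) (d : D) :
    (AddMonoidAlgebra.single g r : L2 R) • (AddMonoidAlgebra.single h s : L2 R) • d
      = (AddMonoidAlgebra.single (g + h) (r * s) : L2 R) • d := by
  rw [smul_smul, AddMonoidAlgebra.single_mul_single]

lemma single_zero_one_smul (d : D) :
    (AddMonoidAlgebra.single (0 : ℤ × ℤ) (1 : R) : L2 R) • d = d := by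
  rw [← AddMonoidAlgebra.one_def, one_smul]

variable (R D)

/-- Multiplication by the monomial `x^{g.1} y^{g.2}`, as an `R`-linear automorphism. -/
noncomputable def mequiv (g : ℤ × ℤ) : D ≃ₗ[R] D :=
  LinearEquiv.ofLinear (mact R D (AddMonoidAlgebra.single g 1))
    (mact R D (AddMonoidAlgebra.single (-g) 1))
    (by ext d
        simp only [LinearMap.coe_comp, Function.comp_apply, mact_apply, LinearMap.id_coe, id_eq]
        rw [single_mul_single_smul]
        simpa using single_zero_one_smul d)
    (by ext d
        simp only [LinearMap.coe_comp, Function.comp_apply, mact_apply, LinearMap.id_coe, id_eq]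
        rw [single_mul_single_smul]
        simpa using single_zero_one_smul d)

@[simp] lemma mequiv_apply (g : ℤ × ℤ) (d : D) :
    mequiv R D g d = (AddMonoidAlgebra.single g (1 : R) : L2 R) • d := rfl

@[simp] lemma mequiv_symm_apply (g : ℤ × ℤ) (d : D) :
    (mequiv R D g).symm d = (AddMonoidAlgebra.single (-g) (1 : R) : L2 R) • d := rfl

lemma mequiv_zpow (g : ℤ × ℤ) (i : ℤ) (d : D) :
    ((mequiv R D g ^ i : D ≃ₗ[R] D)) d
      = (AddMonoidAlgebra.single (i • g) (1 : R) : L2 R) • d := by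
  induction i using Int.induction_on generalizing d with
  | zero => rw [zpow_zero, zero_smul]; exact (single_zero_one_smul d).symm
  | succ k ih =>
      have h : ((mequiv R D g ^ ((k : ℤ) + 1) : D ≃ₗ[R] D)) d
          = ((mequiv R D g ^ (k : ℤ) : D ≃ₗ[R] D)) (mequiv R D g d) := by
        rw [zpow_add_one]; rfl
      rw [h, mequiv_apply, ih, single_mul_single_smul]
      congr 2
      · rw [add_smul, one_smul]
      · ring
  | pred k ih =>
      have h : ((mequiv R D g ^ (-(k : ℤ) - 1) : D ≃ₗ[R] D)) d
          = ((mequiv R D g ^ (-(k : ℤ)) : D ≃ₗ[R] D)) ((mequiv R D g).symm d) := by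
        rw [zpow_sub_one]; rfl
      rw [h, mequiv_symm_apply, ih, single_mul_single_smul]
      congr 2
      · rw [sub_smul, one_smul, sub_eq_add_neg]
      · ring

lemma mequiv_comm (g h : ℤ × ℤ) (d : D) :
    mequiv R D g (mequiv R D h d) = mequiv R D h (mequiv R D g d) := by
  simp only [mequiv_apply]
  rw [single_mul_single_smul, single_mul_single_smul, add_comm g h]

end Monomials

section Comm

variable {R : Type} [CommRing R] {D : Type} [AddCommGroup D] [Module R D]

lemma zpow_comm (t : D ≃ₗ[R] D) (s : D →ₗ[R] D) (hc : ∀ d, s (t d) = t (s d)) (i : ℤ) (d : D) :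
    s ((t ^ i : D ≃ₗ[R] D) d) = (t ^ i : D ≃ₗ[R] D) (s d) := by
  have hsymm : ∀ d, s (t.symm d) = t.symm (s d) := by
    intro d
    apply t.injective
    rw [← hc, t.apply_symm_apply, t.apply_symm_apply]
  induction i using Int.induction_on generalizing d with
  | zero => simp
  | succ k ih =>
      have h : ∀ e : D, (t ^ ((k : ℤ) + 1) : D ≃ₗ[R] D) e
          = (t ^ (k : ℤ) : D ≃ₗ[R] D) (t e) := fun e => by rw [zpow_add_one]; rfl
      rw [h, h, ih, hc]
  | pred k ih =>
      have h : ∀ e : D, (t ^ (-(k : ℤ) - 1) : D ≃ₗ[R] D) e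
          = (t ^ (-(k : ℤ)) : D ≃ₗ[R] D) (t.symm e) := fun e => by rw [zpow_sub_one]; rfl
      rw [h, h, ih, hsymm]

lemma Sg_mapRange (t : D ≃ₗ[R] D) (s : D →ₗ[R] D) (hc : ∀ d, s (t d) = t (s d)) (F : ℤ →₀ D) :
    Sg t (Finsupp.mapRange.linearMap s F) = s (Sg t F) := by
  have h : (Sg t).comp (Finsupp.mapRange.linearMap s) = s.comp (Sg t) := by
    apply Finsupp.lhom_ext
    intro i d
    simp [Sg_single, zpow_comm t s hc]
  exact DFunLike.congr_fun h F

lemma Tw_mapRange (t : D ≃ₗ[R] D) (s : D →ₗ[R] D) (hc : ∀ d, s (t d) = t (s d)) (F : ℤ →₀ D) :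
    Tw t (Finsupp.mapRange.linearMap s F) = Finsupp.mapRange.linearMap s (Tw t F) := by
  ext i
  simp [Tw_apply, hc]

end Comm

section Doubles

variable (R : Type) [CommRing R]
variable (D : Type) [AddCommGroup D] [Module R D] [Module (L2 R) D] [IsScalarTower R (L2 R) D]

/-- The outer twist operator (the `x`-direction). -/
noncomputable def TwX : (ℤ →₀ ℤ →₀ D) →ₗ[R] (ℤ →₀ ℤ →₀ D) :=
  Tw (Finsupp.mapRange.linearEquiv (mequiv R D (1, 0)))

/-- The inner twist operator (the `y`-direction). -/
noncomputable def TwY : (ℤ →₀ ℤ →₀ D) →ₗ[R] (ℤ →₀ ℤ →₀ D) :=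
  Finsupp.mapRange.linearMap (Tw (mequiv R D (0, 1)))

/-- The inner augmentation. -/
noncomputable def SgY : (ℤ →₀ ℤ →₀ D) →ₗ[R] (ℤ →₀ D) :=
  Finsupp.mapRange.linearMap (Sg (mequiv R D (0, 1)))

lemma mequiv_comm' (g h : ℤ × ℤ) (d : D) :
    (mequiv R D g).toLinearMap (mequiv R D h d) = mequiv R D h ((mequiv R D g).toLinearMap d) := by
  simpa using mequiv_comm R D g h d

lemma TwY_apply (G : ℤ →₀ ℤ →₀ D) (k : ℤ) :
    TwY R D G k = Tw (mequiv R D (0, 1)) (G k) := by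
  simp [TwY]

lemma SgY_apply (G : ℤ →₀ ℤ →₀ D) (k : ℤ) :
    SgY R D G k = Sg (mequiv R D (0, 1)) (G k) := by
  simp [SgY]

lemma TwX_apply (G : ℤ →₀ ℤ →₀ D) (k : ℤ) :
    TwX R D G k
      = Finsupp.mapRange.linearMap (mequiv R D (1, 0)).toLinearMap (G k) - G (k - 1) := by
  simp [TwX, Tw_apply, Finsupp.mapRange.linearEquiv_apply]

lemma SgY_TwX (F : ℤ →₀ ℤ →₀ D) :
    SgY R D (TwX R D F) = Tw (mequiv R D (1, 0)) (SgY R D F) := by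
  ext i
  rw [SgY_apply, TwX_apply, map_sub, Sg_mapRange _ _ (fun d => mequiv_comm' R D (1, 0) (0, 1) d),
    Tw_apply, SgY_apply, SgY_apply]
  rfl

lemma SgY_TwY (F : ℤ →₀ ℤ →₀ D) : SgY R D (TwY R D F) = 0 := by
  ext i
  rw [SgY_apply, TwY_apply, Sg_Tw]
  rfl

lemma TwY_eq_zero (F : ℤ →₀ ℤ →₀ D) (h : TwY R D F = 0) : F = 0 := by
  ext i j
  have hi : Tw (mequiv R D (0, 1)) (F i) = 0 := by
    rw [← TwY_apply, h]
    rfl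
  rw [Tw_eq_zero _ _ hi]
  rfl

lemma TwX_TwY (F : ℤ →₀ ℤ →₀ D) : TwX R D (TwY R D F) = TwY R D (TwX R D F) := by
  ext i
  rw [TwX_apply R D (TwY R D F) i, TwY_apply R D F i, TwY_apply R D F (i - 1),
    TwY_apply R D (TwX R D F) i, TwX_apply R D F i,
    map_sub (Tw (mequiv R D (0, 1))),
    Tw_mapRange _ _ (fun d => mequiv_comm' R D (1, 0) (0, 1) d)]

end Doubles

section TensorSide

variable (R : Type) [CommRing R]
variable (D : Type) [AddCommGroup D] [Module R D] [Module (L2 R) D] [IsScalarTower R (L2 R) D]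

/-- The identification `L ⊗_R D ≅ (ℤ →₀ ℤ →₀ D)`. -/
noncomputable def Phi : (L2 R ⊗[R] D) ≃ₗ[R] (ℤ →₀ ℤ →₀ D) :=
  (TensorProduct.congr (AddMonoidAlgebra.coeffLinearEquiv R) (LinearEquiv.refl R D)).trans
    ((TensorProduct.finsuppScalarLeft R D (ℤ × ℤ)).trans (Finsupp.finsuppProdLEquiv R))

lemma prodLEquiv_single (i j : ℤ) (v : D) :
    Finsupp.finsuppProdLEquiv (M := D) R (Finsupp.single (i, j) v)
      = Finsupp.single i (Finsupp.single j v) := by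
  ext a b
  show Finsupp.single (i, j) v (a, b) = _
  rcases eq_or_ne i a with rfl | h
  · rcases eq_or_ne j b with rfl | h2
    · simp
    · rw [Finsupp.single_eq_same, Finsupp.single_eq_of_ne' h2,
        Finsupp.single_eq_of_ne' (by simp [Prod.ext_iff, h2])]
  · rw [Finsupp.single_eq_of_ne' h, Finsupp.single_eq_of_ne' (by simp [Prod.ext_iff, h])]
    rfl

lemma Phi_single (i j : ℤ) (r : R) (c : D) :
    Phi R D (AddMonoidAlgebra.single ((i : ℤ), (j : ℤ)) r ⊗ₜ[R] c)
      = Finsupp.single i (Finsupp.single j (r • c)) := by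
  have h1 : TensorProduct.finsuppScalarLeft R D (ℤ × ℤ)
      ((Finsupp.single ((i : ℤ), (j : ℤ)) r ⊗ₜ[R] c : (ℤ × ℤ →₀ R) ⊗[R] D))
      = Finsupp.single ((i : ℤ), (j : ℤ)) (r • c) := by
    ext g
    rw [TensorProduct.finsuppScalarLeft_apply_tmul_apply]
    rcases eq_or_ne ((i : ℤ), (j : ℤ)) g with rfl | h
    · rw [Finsupp.single_eq_same, Finsupp.single_eq_same]
    · rw [Finsupp.single_eq_of_ne' h, Finsupp.single_eq_of_ne' h, zero_smul]
  rw [Phi, LinearEquiv.trans_apply, LinearEquiv.trans_apply, TensorProduct.congr_tmul]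
  exact (congrArg (⇑(Finsupp.finsuppProdLEquiv R)) h1).trans (prodLEquiv_single R D i j (r • c))

/-- `x ⊗ 1 - 1 ⊗ x` on `L ⊗_R D`. -/
noncomputable def exT : L2 R ⊗[R] D →ₗ[L2 R] L2 R ⊗[R] D :=
  LinearMap.baseChange (L2 R) (mact R D (xvar R))
    - LinearMap.lsmul (L2 R) (L2 R ⊗[R] D) (xvar R)

/-- `y ⊗ 1 - 1 ⊗ y` on `L ⊗_R D`. -/
noncomputable def eyT : L2 R ⊗[R] D →ₗ[L2 R] L2 R ⊗[R] D :=
  LinearMap.baseChange (L2 R) (mact R D (yvar R))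
    - LinearMap.lsmul (L2 R) (L2 R ⊗[R] D) (yvar R)

/-- The evaluation map `L ⊗_R D → D`. -/
noncomputable def epsT : L2 R ⊗[R] D →ₗ[L2 R] D :=
  LinearMap.liftBaseChange (L2 R) LinearMap.id

lemma exT_tmul (p : L2 R) (c : D) :
    exT R D (p ⊗ₜ[R] c) = p ⊗ₜ[R] (xvar R • c) - (xvar R * p) ⊗ₜ[R] c := by
  simp [exT, TensorProduct.smul_tmul', smul_eq_mul]

lemma eyT_tmul (p : L2 R) (c : D) :
    eyT R D (p ⊗ₜ[R] c) = p ⊗ₜ[R] (yvar R • c) - (yvar R * p) ⊗ₜ[R] c := by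
  simp [eyT, TensorProduct.smul_tmul', smul_eq_mul]

lemma epsT_tmul (p : L2 R) (c : D) : epsT R D (p ⊗ₜ[R] c) = p • c := rfl

lemma Phi_exT (z : L2 R ⊗[R] D) : Phi R D (exT R D z) = TwX R D (Phi R D z) := by
  induction z using TensorProduct.induction_on with
  | zero => simp
  | add a b ha hb => rw [map_add, map_add, map_add, ha, hb, map_add]
  | tmul p c =>
      induction p using AddMonoidAlgebra.induction_linear with
      | zero => rw [TensorProduct.zero_tmul]; simp
      | add f g hf hg =>
          rw [TensorProduct.add_tmul, map_add, map_add, hf, hg, map_add, map_add]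
      | single g r =>
          obtain ⟨i, j⟩ := g
          have hmul : xvar R * AddMonoidAlgebra.single ((i : ℤ), (j : ℤ)) r
              = AddMonoidAlgebra.single ((i + 1 : ℤ), (j : ℤ)) r := by
            rw [xvar, AddMonoidAlgebra.single_mul_single, one_mul]
            congr 1
            simp [Prod.ext_iff]
            ring
          rw [exT_tmul, map_sub, hmul, Phi_single, Phi_single, Phi_single, TwX, Tw_single,
            Finsupp.mapRange.linearEquiv_apply,
            Finsupp.mapRange_single]
          congr 2
          have hval : r • xvar R • c = mequiv R D (1, 0) (r • c) := by
            rw [mequiv_apply, ← xvar, smul_comm]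
          exact congrArg (Finsupp.single j) hval

lemma Phi_eyT (z : L2 R ⊗[R] D) : Phi R D (eyT R D z) = TwY R D (Phi R D z) := by
  induction z using TensorProduct.induction_on with
  | zero => simp
  | add a b ha hb => rw [map_add, map_add, map_add, ha, hb, map_add]
  | tmul p c =>
      induction p using AddMonoidAlgebra.induction_linear with
      | zero => rw [TensorProduct.zero_tmul]; simp
      | add f g hf hg =>
          rw [TensorProduct.add_tmul, map_add, map_add, hf, hg, map_add, map_add]
      | single g r =>
          obtain ⟨i, j⟩ := g
          have hmul : yvar R * AddMonoidAlgebra.single ((i : ℤ), (j : ℤ)) r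
              = AddMonoidAlgebra.single ((i : ℤ), (j + 1 : ℤ)) r := by
            rw [yvar, AddMonoidAlgebra.single_mul_single, one_mul]
            congr 1
            simp [Prod.ext_iff]
            ring
          rw [eyT_tmul, map_sub, hmul, Phi_single, Phi_single, Phi_single, TwY,
            Finsupp.mapRange.linearMap_apply, Finsupp.mapRange_single, Tw_single,
            Finsupp.single_sub]
          congr 2
          have hval : r • yvar R • c = mequiv R D (0, 1) (r • c) := by
            rw [mequiv_apply, ← yvar, smul_comm]
          exact congrArg (Finsupp.single j) hval

lemma Phi_epsT (z : L2 R ⊗[R] D) :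
    epsT R D z = Sg (mequiv R D (1, 0)) (SgY R D (Phi R D z)) := by
  induction z using TensorProduct.induction_on with
  | zero => simp
  | add a b ha hb => rw [map_add, map_add, ha, hb, map_add, map_add]
  | tmul p c =>
      induction p using AddMonoidAlgebra.induction_linear with
      | zero => rw [TensorProduct.zero_tmul]; simp
      | add f g hf hg =>
          simp only [TensorProduct.add_tmul, map_add, hf, hg]
      | single g r =>
          obtain ⟨i, j⟩ := g
          rw [epsT_tmul, Phi_single, SgY, Finsupp.mapRange.linearMap_apply,
            Finsupp.mapRange_single, Sg_single, Sg_single, mequiv_zpow, mequiv_zpow,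
            single_mul_single_smul]
          have h1 : (i : ℤ) • ((1 : ℤ), (0 : ℤ)) + (j : ℤ) • ((0 : ℤ), (1 : ℤ)) = (i, j) := by
            simp [Prod.ext_iff]
          rw [h1, one_mul]
          have h2 : (AddMonoidAlgebra.single ((i : ℤ), (j : ℤ)) r : L2 R) • c
              = (AddMonoidAlgebra.single ((i : ℤ), (j : ℤ)) (1 : R) : L2 R) • r • c := by
            rw [smul_comm, ← smul_assoc, AddMonoidAlgebra.smul_single', mul_one]
          exact h2

end TensorSide

section Exactness

variable (R : Type) [CommRing R]
variable {D : Type} [AddCommGroup D] [Module R D] [Module (L2 R) D] [IsScalarTower R (L2 R) D]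

lemma exT_injective (z : L2 R ⊗[R] D) (h : exT R D z = 0) : z = 0 := by
  have h1 : TwX R D (Phi R D z) = 0 := by rw [← Phi_exT, h, map_zero]
  have h2 : Phi R D z = 0 := Tw_eq_zero _ _ h1
  have := congrArg (Phi R D).symm h2
  simpa using this

lemma eyT_injective (z : L2 R ⊗[R] D) (h : eyT R D z = 0) : z = 0 := by
  have h1 : TwY R D (Phi R D z) = 0 := by rw [← Phi_eyT, h, map_zero]
  have h2 : Phi R D z = 0 := TwY_eq_zero R D _ h1
  have := congrArg (Phi R D).symm h2
  simpa using this

lemma middle_exact (a b : L2 R ⊗[R] D) (h : eyT R D a + exT R D b = 0) :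
    ∃ c : L2 R ⊗[R] D, a = -exT R D c ∧ b = eyT R D c := by
  set A := Phi R D a with hA
  set B := Phi R D b with hB
  have h0 : TwY R D A + TwX R D B = 0 := by
    rw [hA, hB, ← Phi_eyT, ← Phi_exT, ← map_add, h, map_zero]
  have h1 : SgY R D (TwX R D B) = 0 := by
    have := congrArg (SgY R D) h0
    rwa [map_add, SgY_TwY, zero_add, map_zero] at this
  have h2 : SgY R D B = 0 := by
    rw [SgY_TwX] at h1
    exact Tw_eq_zero _ _ h1
  have h3 : ∀ i, Sg (mequiv R D (0, 1)) (B i) = 0 := by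
    intro i
    rw [← SgY_apply, h2]
    rfl
  obtain ⟨G, hG⟩ := liftPointwise (mequiv R D (0, 1)) B h3
  have hGB : TwY R D G = B := hG
  refine ⟨(Phi R D).symm G, ?_, ?_⟩
  · -- a = - exT c
    have h4 : TwY R D (A + TwX R D G) = 0 := by
      rw [map_add, ← TwX_TwY, hGB, h0]
    have h5 : A + TwX R D G = 0 := TwY_eq_zero R D _ h4
    apply (Phi R D).injective
    rw [map_neg, Phi_exT, LinearEquiv.apply_symm_apply, ← hA]
    exact eq_neg_of_add_eq_zero_left h5
  · apply (Phi R D).injective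
    rw [Phi_eyT, LinearEquiv.apply_symm_apply, hGB, hB]

lemma eps_exact (z : L2 R ⊗[R] D) (h : epsT R D z = 0) :
    ∃ a b : L2 R ⊗[R] D, z = eyT R D a + exT R D b := by
  set Z := Phi R D z with hZ
  have h0 : Sg (mequiv R D (1, 0)) (SgY R D Z) = 0 := by rw [← Phi_epsT, h]
  obtain ⟨H, hH⟩ := mem_range_Tw_of_Sg_eq_zero _ _ h0
  set H' : ℤ →₀ ℤ →₀ D := Finsupp.mapRange.linearMap (Finsupp.lsingle (R := R) (0 : ℤ)) H with hH'
  have hSgH' : SgY R D H' = H := by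
    ext i
    rw [SgY_apply, hH']
    simp [Sg_single]
  have hZ2 : ∀ i, Sg (mequiv R D (0, 1)) ((Z - TwX R D H') i) = 0 := by
    intro i
    rw [← SgY_apply]
    rw [map_sub, SgY_TwX, hSgH', hH, sub_self]
    rfl
  obtain ⟨K, hK⟩ := liftPointwise (mequiv R D (0, 1)) (Z - TwX R D H') hZ2
  refine ⟨(Phi R D).symm K, (Phi R D).symm H', ?_⟩
  apply (Phi R D).injective
  rw [map_add, Phi_eyT, Phi_exT, LinearEquiv.apply_symm_apply, LinearEquiv.apply_symm_apply,
    ← hZ]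
  have : TwY R D K = Z - TwX R D H' := hK
  rw [this]
  abel

end Exactness

section Equivariant

variable (R : Type) [CommRing R]
variable {D E F : Type}
variable [AddCommGroup D] [Module R D] [Module (L2 R) D] [IsScalarTower R (L2 R) D]
variable [AddCommGroup E] [Module R E] [Module (L2 R) E] [IsScalarTower R (L2 R) E]
variable [AddCommGroup F] [Module R F] [Module (L2 R) F] [IsScalarTower R (L2 R) F]

lemma bc_exT (φ : D →ₗ[R] E) (hφ : ∀ (m : L2 R) (d : D), φ (m • d) = m • φ d)
    (z : L2 R ⊗[R] D) :
    LinearMap.baseChange (L2 R) φ (exT R D z) = exT R E (LinearMap.baseChange (L2 R) φ z) := by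
  induction z using TensorProduct.induction_on with
  | zero => simp
  | add a b ha hb => simp only [map_add, ha, hb]
  | tmul p c =>
      simp only [exT_tmul, map_sub, LinearMap.baseChange_tmul]
      rw [hφ]

lemma bc_eyT (φ : D →ₗ[R] E) (hφ : ∀ (m : L2 R) (d : D), φ (m • d) = m • φ d)
    (z : L2 R ⊗[R] D) :
    LinearMap.baseChange (L2 R) φ (eyT R D z) = eyT R E (LinearMap.baseChange (L2 R) φ z) := by
  induction z using TensorProduct.induction_on with
  | zero => simp
  | add a b ha hb => simp only [map_add, ha, hb]
  | tmul p c =>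
      simp only [eyT_tmul, map_sub, LinearMap.baseChange_tmul]
      rw [hφ]

lemma epsT_bc (φ : D →ₗ[R] E) (hφ : ∀ (m : L2 R) (d : D), φ (m • d) = m • φ d)
    (z : L2 R ⊗[R] D) :
    epsT R E (LinearMap.baseChange (L2 R) φ z) = φ (epsT R D z) := by
  induction z using TensorProduct.induction_on with
  | zero => simp
  | add a b ha hb => simp only [map_add, ha, hb]
  | tmul p c =>
      rw [LinearMap.baseChange_tmul, epsT_tmul, epsT_tmul, hφ]

lemma epsT_eyT (z : L2 R ⊗[R] D) : epsT R D (eyT R D z) = 0 := by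
  induction z using TensorProduct.induction_on with
  | zero => simp
  | add a b ha hb => simp only [map_add, ha, hb, add_zero]
  | tmul p c =>
      rw [eyT_tmul, map_sub, epsT_tmul, epsT_tmul, smul_smul, mul_comm, sub_self]

lemma epsT_one_tmul (d : D) : epsT R D ((1 : L2 R) ⊗ₜ[R] d) = d := by
  rw [epsT_tmul, one_smul]

lemma exT_eyT (z : L2 R ⊗[R] D) : exT R D (eyT R D z) = eyT R D (exT R D z) := by
  induction z using TensorProduct.induction_on with
  | zero => simp
  | add a b ha hb => simp only [map_add, ha, hb]
  | tmul p c =>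
      simp only [eyT_tmul, exT_tmul, map_sub]
      rw [show xvar R • yvar R • c = yvar R • xvar R • c from by
            rw [smul_smul, smul_smul, mul_comm],
          show xvar R * (yvar R * p) = yvar R * (xvar R * p) from by ring]
      abel

lemma bc_bc (φ : D →ₗ[R] E) (ψ : E →ₗ[R] F) (hc : ψ.comp φ = 0) (z : L2 R ⊗[R] D) :
    LinearMap.baseChange (L2 R) ψ (LinearMap.baseChange (L2 R) φ z) = 0 := by
  induction z using TensorProduct.induction_on with
  | zero => simp
  | add a b ha hb => simp only [map_add, ha, hb, add_zero]
  | tmul p c =>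
      rw [LinearMap.baseChange_tmul, LinearMap.baseChange_tmul]
      have : ψ (φ c) = 0 := DFunLike.congr_fun hc c
      rw [this, TensorProduct.tmul_zero]

end Equivariant

end

end TwoTorusAux

/-- For a cochain complex `C` of `R[x,x⁻¹,y,y⁻¹]`-modules, the evaluation map
`C ⊗_R L → C`, `p ⊗ z ↦ pz`, induces a quasi-isomorphism from the mapping 2-torus
`T(y,x;0)` to `C`, where `x` and `y` denote the `R`-linear self maps of `C` given by
multiplication by the indeterminates. -/
theorem mappingTwoTorus_to_complex_quasiIso
    [∀ n, Module (L2 R) (C n)] [∀ n, IsScalarTower R (L2 R) (C n)]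
    (dC : ∀ n, C n →ₗ[L2 R] C (n + 1))
    (hsq : ∀ n (x : C n), dC (n + 1) (dC n x) = 0) :
    IsQuasiIso (L2 R) (t2X R C) C
      (t2D R C (fun m => (dC m).restrictScalars R)
        (fun m => ((LinearMap.lsmul (L2 R) (C m)) (yvar R)).restrictScalars R)
        (fun m => ((LinearMap.lsmul (L2 R) (C m)) (xvar R)).restrictScalars R))
      dC
      (fun n => (LinearMap.liftBaseChange (L2 R) (LinearMap.id : C n →ₗ[R] C n)).comp
        ((LinearMap.snd (L2 R) (L2 R ⊗[R] C (n + 1)) (L2 R ⊗[R] C n)).comp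
          ((LinearMap.snd (L2 R) (L2 R ⊗[R] C (n + 1))
            ((L2 R ⊗[R] C (n + 1)) × (L2 R ⊗[R] C n))).comp
            (LinearMap.snd (L2 R) (L2 R ⊗[R] C (n + 1 + 1))
              ((L2 R ⊗[R] C (n + 1)) × (L2 R ⊗[R] C (n + 1)) × (L2 R ⊗[R] C n)))))) := by
  classical
  have hDq : ∀ (n : ℤ) (m : L2 R) (d : C n),
      ((dC n).restrictScalars R) (m • d) = m • ((dC n).restrictScalars R) d :=
    fun n m d => map_smul (dC n) m d
  have dd : ∀ n : ℤ, ((dC (n + 1)).restrictScalars R).comp ((dC n).restrictScalars R)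
      = (0 : C n →ₗ[R] C (n + 1 + 1)) := by
    intro n
    ext d
    exact hsq n d
  constructor
  · intro q y hy
    refine ⟨((0 : L2 R ⊗[R] C (q + 1 + 1 + 1)), (0 : L2 R ⊗[R] C (q + 1 + 1)),
        (0 : L2 R ⊗[R] C (q + 1 + 1)), (1 : L2 R) ⊗ₜ[R] y), ?_, 0, ?_⟩
    · have c1 : LinearMap.baseChange (L2 R) ((dC (q + 1 + 1 + 1)).restrictScalars R)
          (0 : L2 R ⊗[R] C (q + 1 + 1 + 1)) = 0 := map_zero _
      have c2 : -(TwoTorusAux.exT R (C (q + 1 + 1 + 1)) 0)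
          - LinearMap.baseChange (L2 R) ((dC (q + 1 + 1)).restrictScalars R)
            (0 : L2 R ⊗[R] C (q + 1 + 1)) = 0 := by simp
      have c3 : TwoTorusAux.eyT R (C (q + 1 + 1 + 1)) 0
          - LinearMap.baseChange (L2 R) ((dC (q + 1 + 1)).restrictScalars R)
            (0 : L2 R ⊗[R] C (q + 1 + 1)) = 0 := by simp
      have c4 : TwoTorusAux.eyT R (C (q + 1 + 1)) 0 + TwoTorusAux.exT R (C (q + 1 + 1)) 0
          + LinearMap.baseChange (L2 R) ((dC (q + 1)).restrictScalars R)
            ((1 : L2 R) ⊗ₜ[R] y) = 0 := by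
        rw [map_zero, map_zero, zero_add, zero_add, LinearMap.baseChange_tmul]
        have : ((dC (q + 1)).restrictScalars R) y = 0 := hy
        rw [this, TensorProduct.tmul_zero]
      exact Prod.ext_iff.mpr ⟨c1, Prod.ext_iff.mpr ⟨c2, Prod.ext_iff.mpr ⟨c3, c4⟩⟩⟩
    · have h0 : y - (1 : L2 R) • y = dC q 0 := by rw [one_smul, sub_self, map_zero]
      exact h0
  · intro q x hx hexact
    obtain ⟨p1, p2, p3, p4⟩ := x
    obtain ⟨u, hu⟩ := hexact
    have hu' : TwoTorusAux.epsT R (C (q + 1)) p4 = dC q u := hu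
    have e2 : -((TwoTorusAux.exT R (C (q + 1 + 1 + 1))) p1) - (LinearMap.baseChange (L2 R) ((dC (q + 1 + 1)).restrictScalars R)) p2 = 0 :=
      congrArg (fun w => w.2.1) hx
    have e4 : (TwoTorusAux.eyT R (C (q + 1 + 1))) p2 + (TwoTorusAux.exT R (C (q + 1 + 1))) p3 + (LinearMap.baseChange (L2 R) ((dC (q + 1)).restrictScalars R)) p4 = 0 :=
      congrArg (fun w => w.2.2.2) hx
    have hw4 : TwoTorusAux.epsT R (C (q + 1)) (p4 - (LinearMap.baseChange (L2 R) ((dC q).restrictScalars R)) ((1 : L2 R) ⊗ₜ[R] u)) = 0 := by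
      rw [map_sub, hu', LinearMap.baseChange_tmul, TwoTorusAux.epsT_tmul, one_smul]
      exact sub_self _
    obtain ⟨a, b, hab⟩ := TwoTorusAux.eps_exact R _ hw4
    have h5 : (LinearMap.baseChange (L2 R) ((dC (q + 1)).restrictScalars R)) ((TwoTorusAux.eyT R (C (q + 1))) a) + (LinearMap.baseChange (L2 R) ((dC (q + 1)).restrictScalars R)) ((TwoTorusAux.exT R (C (q + 1))) b) = (LinearMap.baseChange (L2 R) ((dC (q + 1)).restrictScalars R)) p4 := by
      rw [← map_add, ← hab, map_sub, TwoTorusAux.bc_bc R _ _ (dd q), sub_zero]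
    have hr : (TwoTorusAux.eyT R (C (q + 1 + 1))) (p2 + (LinearMap.baseChange (L2 R) ((dC (q + 1)).restrictScalars R)) a) + (TwoTorusAux.exT R (C (q + 1 + 1))) (p3 + (LinearMap.baseChange (L2 R) ((dC (q + 1)).restrictScalars R)) b) = 0 := by
      rw [map_add, map_add, ← TwoTorusAux.bc_eyT R _ (hDq (q + 1)) a,
        ← TwoTorusAux.bc_exT R _ (hDq (q + 1)) b]
      have hgoal : ((TwoTorusAux.eyT R (C (q + 1 + 1))) p2 + (LinearMap.baseChange (L2 R) ((dC (q + 1)).restrictScalars R)) ((TwoTorusAux.eyT R (C (q + 1))) a)) + ((TwoTorusAux.exT R (C (q + 1 + 1))) p3 + (LinearMap.baseChange (L2 R) ((dC (q + 1)).restrictScalars R)) ((TwoTorusAux.exT R (C (q + 1))) b))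
          = (TwoTorusAux.eyT R (C (q + 1 + 1))) p2 + (TwoTorusAux.exT R (C (q + 1 + 1))) p3 + (LinearMap.baseChange (L2 R) ((dC (q + 1)).restrictScalars R)) p4 := by
        rw [← h5]; abel
      rw [hgoal]
      exact e4
    obtain ⟨c, hc2, hc3⟩ := TwoTorusAux.middle_exact R _ _ hr
    have g1 : (LinearMap.baseChange (L2 R) ((dC (q + 1 + 1)).restrictScalars R)) c = p1 := by
      have h8 : (TwoTorusAux.exT R (C (q + 1 + 1 + 1))) p1 = -((LinearMap.baseChange (L2 R) ((dC (q + 1 + 1)).restrictScalars R)) p2) := by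
        have h9 : (TwoTorusAux.exT R (C (q + 1 + 1 + 1))) p1 + (LinearMap.baseChange (L2 R) ((dC (q + 1 + 1)).restrictScalars R)) p2 = 0 := by
          rw [show (TwoTorusAux.exT R (C (q + 1 + 1 + 1))) p1 + (LinearMap.baseChange (L2 R) ((dC (q + 1 + 1)).restrictScalars R)) p2 = -(-((TwoTorusAux.exT R (C (q + 1 + 1 + 1))) p1) - (LinearMap.baseChange (L2 R) ((dC (q + 1 + 1)).restrictScalars R)) p2) from by abel, e2, neg_zero]
        exact eq_neg_of_add_eq_zero_left h9
      have h6 : (TwoTorusAux.exT R (C (q + 1 + 1 + 1))) ((LinearMap.baseChange (L2 R) ((dC (q + 1 + 1)).restrictScalars R)) c - p1) = 0 := by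
        rw [map_sub, ← TwoTorusAux.bc_exT R _ (hDq (q + 1 + 1)) c]
        have h7 : (TwoTorusAux.exT R (C (q + 1 + 1))) c = -(p2 + (LinearMap.baseChange (L2 R) ((dC (q + 1)).restrictScalars R)) a) := by
          rw [hc2, neg_neg]
        have hz : (LinearMap.baseChange (L2 R) ((dC (q + 1 + 1)).restrictScalars R)) ((LinearMap.baseChange (L2 R) ((dC (q + 1)).restrictScalars R)) a) = 0 := TwoTorusAux.bc_bc R _ _ (dd (q + 1)) a
        rw [h7, map_neg, map_add, hz, add_zero, h8]
        abel
      have h11 := TwoTorusAux.exT_injective R _ h6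
      exact sub_eq_zero.mp h11
    have g2 : -((TwoTorusAux.exT R (C (q + 1 + 1))) c) - (LinearMap.baseChange (L2 R) ((dC (q + 1)).restrictScalars R)) a = p2 := by
      rw [← hc2]; abel
    have g3 : (TwoTorusAux.eyT R (C (q + 1 + 1))) c - (LinearMap.baseChange (L2 R) ((dC (q + 1)).restrictScalars R)) b = p3 := by
      rw [← hc3]; abel
    have g4 : (TwoTorusAux.eyT R (C (q + 1))) a + (TwoTorusAux.exT R (C (q + 1))) b + (LinearMap.baseChange (L2 R) ((dC q).restrictScalars R)) ((1 : L2 R) ⊗ₜ[R] u) = p4 := by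
      rw [← hab]; abel
    exact ⟨(c, a, b, (1 : L2 R) ⊗ₜ[R] u),
      Prod.ext_iff.mpr ⟨g1, Prod.ext_iff.mpr ⟨g2, Prod.ext_iff.mpr ⟨g3, g4⟩⟩⟩⟩

end
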